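/- Let n ≥ 2, let Q = (−π, π)ⁿ, let α > 0 and λ > 0, and let ζ = α e₁ + i α e₂ ∈ ℂⁿ, where e₁, e₂ are the first two standard basis vectors of ℝⁿ (so ζ·ζ = 0). Let S ⊂ ℤⁿ be a finite set, let (c_l)_{l∈S} be complex numbers, and set f(x) = Σ_{l∈S} c_l e^{i (l + ½e₁)·x}. Then there exists a smooth function r : ℝⁿ → ℂ satisfying (−Δ − 2λ ζ·∇) r = f on ℝⁿ and ∫_Q |r(x)|² dx ≤ (λα)^{−2} ∫_Q |f(x)|² dx. -/

import Mathlib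

open MeasureTheory Complex

noncomputable section

/-- ℝⁿ with the Euclidean structure. -/
abbrev Euc (n : ℕ) := EuclideanSpace ℝ (Fin n)

/-- Partial derivative ∂_{x_j} of a complex-valued function on ℝⁿ. -/
noncomputable def pdC {n : ℕ} (u : Euc n → ℂ) (j : Fin n) (x : Euc n) : ℂ :=
  fderiv ℝ u x (EuclideanSpace.single j 1)

/-- The cube Q = (−π, π)ⁿ. -/
def cubeQ (n : ℕ) : Set (Euc n) := {x | ∀ j, x j ∈ Set.Ioo (-Real.pi) Real.pi}

namespace Stmt13Aux

variable {n : ℕ}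

/-- The continuous linear map `x ↦ ∑ j, (I * b j) * x j`. -/
def LL (b : Fin n → ℝ) : Euc n →L[ℝ] ℂ :=
  ∑ j, (Complex.I * (b j : ℂ)) • ((Complex.ofRealCLM).comp (EuclideanSpace.proj j))

lemma LL_apply (b : Fin n → ℝ) (x : Euc n) :
    LL b x = ∑ j, (Complex.I * (b j : ℂ)) * (x j : ℂ) := by
  simp [LL, ContinuousLinearMap.sum_apply, smul_eq_mul]

lemma LL_single (b : Fin n → ℝ) (j : Fin n) :
    LL b (EuclideanSpace.single j 1) = Complex.I * (b j : ℂ) := by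
  rw [LL_apply]
  rw [Finset.sum_eq_single j]
  · simp
  · intro k _ hk
    simp [EuclideanSpace.single_apply, hk]
  · simp

/-- The exponential `w b x = exp(∑ j, I * b j * x j)`. -/
def w (b : Fin n → ℝ) (x : Euc n) : ℂ := Complex.exp (LL b x)

lemma w_eq (b : Fin n → ℝ) (x : Euc n) :
    w b x = Complex.exp (Complex.I * ∑ j, (b j : ℂ) * (x j : ℂ)) := by
  rw [w, LL_apply, Finset.mul_sum]
  congr 1
  exact Finset.sum_congr rfl fun j _ => (mul_assoc _ _ _)

lemma contDiff_w (b : Fin n → ℝ) : ContDiff ℝ (⊤ : ℕ∞) (w b) :=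
  ((LL b).contDiff (n := (⊤ : ℕ∞))).cexp

lemma hasFDerivAt_w (b : Fin n → ℝ) (x : Euc n) :
    HasFDerivAt (w b) (w b x • LL b) x :=
  ((LL b).hasFDerivAt).cexp

lemma differentiable_w (b : Fin n → ℝ) : Differentiable ℝ (w b) :=
  fun x => (hasFDerivAt_w b x).differentiableAt

lemma norm_w (b : Fin n → ℝ) (x : Euc n) : ‖w b x‖ = 1 := by
  rw [w, LL_apply, Complex.norm_exp]
  have : (∑ j, (Complex.I * (b j : ℂ)) * (x j : ℂ)).re = 0 := by
    rw [Complex.re_sum]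
    refine Finset.sum_eq_zero fun j _ => ?_
    simp [Complex.mul_re]
  rw [this, Real.exp_zero]

lemma continuous_w (b : Fin n → ℝ) : Continuous (w b) :=
  (contDiff_w b).continuous

lemma abs_w (b : Fin n → ℝ) (x : Euc n) : ‖w b x‖ = 1 := norm_w b x

lemma pdC_w (b : Fin n → ℝ) (j : Fin n) (x : Euc n) :
    pdC (w b) j x = (Complex.I * (b j : ℂ)) * w b x := by
  rw [pdC, (hasFDerivAt_w b x).fderiv]
  simp [LL_single, mul_comm]

lemma pdC_const_mul (a : ℂ) {u : Euc n → ℂ} {x : Euc n} (hu : DifferentiableAt ℝ u x)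
    (j : Fin n) : pdC (fun y => a * u y) j x = a * pdC u j x := by
  rw [pdC, fderiv_const_mul hu a]
  simp [pdC]

lemma pdC_sum_mul {ι : Type*} (S : Finset ι) (a : ι → ℂ) (b : ι → Fin n → ℝ)
    (j : Fin n) (x : Euc n) :
    pdC (fun y => ∑ l ∈ S, a l * w (b l) y) j x
      = ∑ l ∈ S, a l * ((Complex.I * (b l j : ℂ)) * w (b l) x) := by
  rw [pdC, fderiv_fun_sum (fun l _ =>
    ((differentiable_w (b l) x).const_mul (a l)))]
  rw [ContinuousLinearMap.sum_apply]
  refine Finset.sum_congr rfl fun l _ => ?_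
  have := pdC_const_mul (n := n) (a l) (differentiable_w (b l) x) j
  rw [pdC] at this
  rw [this, pdC_w]

/-- The half-integer frequency vector. -/
def bet (l : Fin n → ℤ) : Fin n → ℝ :=
  fun j => (l j : ℝ) + if (j : ℕ) = 0 then (1 : ℝ) / 2 else 0

lemma integral_Ioo_exp_int (k : ℤ) :
    ∫ x in Set.Ioo (-Real.pi) Real.pi, Complex.exp (Complex.I * (k : ℂ) * (x : ℂ)) =
      if k = 0 then ((2 * Real.pi : ℝ) : ℂ) else 0 := by
  by_cases hk : k = 0
  · subst hk
    simp only [Int.cast_zero, mul_zero, zero_mul, Complex.exp_zero, if_true]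
    rw [setIntegral_const, measureReal_def, Real.volume_Ioo,
      ENNReal.toReal_ofReal (by linarith [Real.pi_pos] : (0:ℝ) ≤ Real.pi - -Real.pi)]
    simp [smul_eq_mul]
    ring
  · rw [if_neg hk]
    rw [← integral_Ioc_eq_integral_Ioo,
      ← intervalIntegral.integral_of_le (by linarith [Real.pi_pos] : -Real.pi ≤ Real.pi)]
    have hc : (Complex.I * (k : ℂ)) ≠ 0 := by
      simp [Complex.I_ne_zero, hk]
    rw [integral_exp_mul_complex hc]
    have h1 : Complex.I * (k:ℂ) * (Real.pi : ℂ)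
        = Complex.I * (k:ℂ) * ((-Real.pi : ℝ) : ℂ) + (k:ℂ) * (2 * Real.pi * Complex.I) := by
      push_cast; ring
    rw [h1, Complex.exp_add, Complex.exp_int_mul_two_pi_mul_I, mul_one]
    simp

lemma ortho (k : Fin n → ℤ) :
    ∫ x in cubeQ n, ∏ j, Complex.exp (Complex.I * (k j : ℂ) * (x j : ℂ)) =
      ∏ j : Fin n, (if k j = 0 then ((2 * Real.pi : ℝ) : ℂ) else 0) := by
  have e := EuclideanSpace.volume_preserving_symm_measurableEquiv_toLp (Fin n)
  set P : Set (Fin n → ℝ) := Set.univ.pi fun _ => Set.Ioo (-Real.pi) Real.pi with hP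
  set G : (Fin n → ℝ) → ℂ :=
    fun y => ∏ j, Complex.exp (Complex.I * (k j : ℂ) * (y j : ℂ)) with hG
  have hpre : cubeQ n = ((MeasurableEquiv.toLp 2 (Fin n → ℝ)).symm) ⁻¹' P := by
    ext x
    simp [cubeQ, hP, Set.mem_pi, MeasurableEquiv.coe_toLp_symm]
  have h1 : ∫ x in cubeQ n, G (((MeasurableEquiv.toLp 2 (Fin n → ℝ)).symm) x) = ∫ y in P, G y := by
    rw [hpre]
    exact e.setIntegral_preimage_emb (MeasurableEquiv.measurableEmbedding _) G P
  have h2 : (∫ x in cubeQ n, ∏ j, Complex.exp (Complex.I * (k j : ℂ) * (x j : ℂ)))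
      = ∫ y in P, G y := h1
  rw [h2]
  have hmeas : MeasurableSet P := MeasurableSet.univ_pi fun _ => measurableSet_Ioo
  rw [← integral_indicator hmeas]
  have h3 : P.indicator G = fun y => ∏ j,
      (Set.Ioo (-Real.pi) Real.pi).indicator
        (fun t : ℝ => Complex.exp (Complex.I * (k j : ℂ) * (t : ℂ))) (y j) := by
    funext y
    by_cases hy : y ∈ P
    · rw [Set.indicator_of_mem hy]
      have hall : ∀ j, y j ∈ Set.Ioo (-Real.pi) Real.pi := fun j => hy j (Set.mem_univ j)
      simp only [hG]
      exact Finset.prod_congr rfl fun j _ =>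
        (Set.indicator_of_mem (hall j)
          (fun t : ℝ => Complex.exp (Complex.I * (k j : ℂ) * (t : ℂ)))).symm
    · rw [Set.indicator_of_notMem hy]
      have hex : ∃ j, y j ∉ Set.Ioo (-Real.pi) Real.pi := by
        by_contra hcon
        push_neg at hcon
        exact hy fun j _ => hcon j
      obtain ⟨j, hj⟩ := hex
      refine (Finset.prod_eq_zero (Finset.mem_univ j) ?_).symm
      rw [Set.indicator_of_notMem hj]
  rw [h3]
  beta_reduce
  rw [volume_pi, MeasureTheory.integral_fintype_prod_eq_prod (ι := Fin n)
    (f := fun j t => (Set.Ioo (-Real.pi) Real.pi).indicator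
      (fun s : ℝ => Complex.exp (Complex.I * (k j : ℂ) * (s : ℂ))) t)]
  refine Finset.prod_congr rfl fun j _ => ?_
  rw [integral_indicator measurableSet_Ioo, integral_Ioo_exp_int]

lemma cubeQ_eq : cubeQ n = ((MeasurableEquiv.toLp 2 (Fin n → ℝ)).symm) ⁻¹'
    (Set.univ.pi fun _ => Set.Ioo (-Real.pi) Real.pi) := by
  ext x
  simp [cubeQ, Set.mem_pi, MeasurableEquiv.coe_toLp_symm]

lemma measurableSet_cubeQ : MeasurableSet (cubeQ n) := by
  rw [cubeQ_eq]
  exact ((MeasurableEquiv.toLp 2 (Fin n → ℝ)).symm).measurable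
    (MeasurableSet.univ_pi fun _ => measurableSet_Ioo)

lemma volume_cubeQ_lt_top : volume (cubeQ n) < ⊤ := by
  rw [cubeQ_eq, (EuclideanSpace.volume_preserving_symm_measurableEquiv_toLp (Fin n)).measure_preimage
    (MeasurableSet.univ_pi fun _ => measurableSet_Ioo).nullMeasurableSet]
  rw [volume_pi_pi]
  exact ENNReal.prod_lt_top fun _ _ => measure_Ioo_lt_top

lemma w_mul_conj (l m : Fin n → ℤ) (x : Euc n) :
    w (bet l) x * (starRingEnd ℂ) (w (bet m) x)
      = ∏ j, Complex.exp (Complex.I * ((l j - m j : ℤ) : ℂ) * (x j : ℂ)) := by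
  rw [w_eq, w_eq, ← Complex.exp_conj, ← Complex.exp_add, ← Complex.exp_sum]
  congr 1
  simp only [map_mul, Complex.conj_I, map_sum, Complex.conj_ofReal]
  rw [Finset.mul_sum, Finset.mul_sum, ← Finset.sum_add_distrib]
  refine Finset.sum_congr rfl fun j _ => ?_
  simp only [bet]
  push_cast
  ring

/-- The key L² computation: `∫_Q ‖∑ a_l v_l‖² = (2π)^n ∑ ‖a_l‖²`. -/
lemma l2norm (S : Finset (Fin n → ℤ)) (a : (Fin n → ℤ) → ℂ) :
    ∫ x in cubeQ n, ‖∑ l ∈ S, a l * w (bet l) x‖ ^ 2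
      = (2 * Real.pi) ^ n * ∑ l ∈ S, ‖a l‖ ^ 2 := by
  set F : Euc n → ℂ := fun x => ∑ l ∈ S, a l * w (bet l) x with hF
  haveI : IsFiniteMeasure (volume.restrict (cubeQ n)) :=
    ⟨by rw [Measure.restrict_apply_univ]; exact volume_cubeQ_lt_top⟩
  have hterm : ∀ l m : Fin n → ℤ, Integrable
      (fun x => (a l * (starRingEnd ℂ) (a m)) * (w (bet l) x * (starRingEnd ℂ) (w (bet m) x)))
      (volume.restrict (cubeQ n)) := by
    intro l m
    refine Integrable.mono' (integrable_const (‖a l * (starRingEnd ℂ) (a m)‖)) ?_ ?_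
    · exact (continuous_const.mul ((continuous_w (bet l)).mul
        (Complex.continuous_conj.comp (continuous_w (bet m))))).aestronglyMeasurable
    · filter_upwards with x
      simp [norm_mul, RCLike.norm_conj, abs_w]
  have hexpand : ∀ x : Euc n, F x * (starRingEnd ℂ) (F x) = ∑ l ∈ S, ∑ m ∈ S,
      (a l * (starRingEnd ℂ) (a m)) * (w (bet l) x * (starRingEnd ℂ) (w (bet m) x)) := by
    intro x
    rw [hF]
    simp only [map_sum, map_mul]
    rw [Finset.sum_mul_sum]
    exact Finset.sum_congr rfl fun l _ => Finset.sum_congr rfl fun m _ => by ring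
  have hInt : Integrable (fun x => F x * (starRingEnd ℂ) (F x)) (volume.restrict (cubeQ n)) := by
    have heq : (fun x : Euc n => F x * (starRingEnd ℂ) (F x)) = fun x => ∑ l ∈ S, ∑ m ∈ S,
        (a l * (starRingEnd ℂ) (a m)) * (w (bet l) x * (starRingEnd ℂ) (w (bet m) x)) :=
      funext hexpand
    rw [heq]
    exact integrable_finset_sum _ fun l _ => integrable_finset_sum _ fun m _ => hterm l m
  have hIval : (∫ x in cubeQ n, F x * (starRingEnd ℂ) (F x))
      = (((2 * Real.pi) ^ n : ℝ) : ℂ) * ∑ l ∈ S, (a l * (starRingEnd ℂ) (a l)) := by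
    calc ∫ x in cubeQ n, F x * (starRingEnd ℂ) (F x)
        = ∫ x in cubeQ n, ∑ l ∈ S, ∑ m ∈ S,
            (a l * (starRingEnd ℂ) (a m)) * (w (bet l) x * (starRingEnd ℂ) (w (bet m) x)) := by
          exact integral_congr_ae (Filter.Eventually.of_forall hexpand)
      _ = ∑ l ∈ S, ∑ m ∈ S, ∫ x in cubeQ n,
            (a l * (starRingEnd ℂ) (a m)) * (w (bet l) x * (starRingEnd ℂ) (w (bet m) x)) := by
          rw [integral_finset_sum _ (fun l _ => integrable_finset_sum _ fun m _ => hterm l m)]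
          exact Finset.sum_congr rfl fun l _ => integral_finset_sum _ fun m _ => hterm l m
      _ = ∑ l ∈ S, ∑ m ∈ S, (a l * (starRingEnd ℂ) (a m)) *
            ∫ x in cubeQ n, w (bet l) x * (starRingEnd ℂ) (w (bet m) x) := by
          exact Finset.sum_congr rfl fun l _ => Finset.sum_congr rfl fun m _ =>
            integral_const_mul _ _
      _ = ∑ l ∈ S, ∑ m ∈ S, (a l * (starRingEnd ℂ) (a m)) *
            (if l = m then (((2 * Real.pi) ^ n : ℝ) : ℂ) else 0) := by
          refine Finset.sum_congr rfl fun l _ => Finset.sum_congr rfl fun m _ => ?_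
          congr 1
          have h1 : (∫ x in cubeQ n, w (bet l) x * (starRingEnd ℂ) (w (bet m) x))
              = ∫ x in cubeQ n, ∏ j, Complex.exp
                (Complex.I * (((fun j => l j - m j) j : ℤ) : ℂ) * ((x : Euc n) j : ℂ)) :=
            integral_congr_ae (Filter.Eventually.of_forall fun x => w_mul_conj l m x)
          rw [h1, ortho (fun j => l j - m j)]
          by_cases h : l = m
          · subst h
            simp [Finset.prod_const, Complex.ofReal_pow]
          · rw [if_neg h]
            obtain ⟨j, hj⟩ := Function.ne_iff.mp h
            exact Finset.prod_eq_zero (Finset.mem_univ j) (if_neg (sub_ne_zero.mpr hj))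
      _ = ∑ l ∈ S, (a l * (starRingEnd ℂ) (a l)) * (((2 * Real.pi) ^ n : ℝ) : ℂ) := by
          refine Finset.sum_congr rfl fun l hl => ?_
          rw [Finset.sum_eq_single_of_mem l hl]
          · rw [if_pos rfl]
          · intro m _ hne
            rw [if_neg (fun h => hne (h.symm)), mul_zero]
      _ = (((2 * Real.pi) ^ n : ℝ) : ℂ) * ∑ l ∈ S, (a l * (starRingEnd ℂ) (a l)) := by
          rw [Finset.mul_sum]
          exact Finset.sum_congr rfl fun l _ => mul_comm _ _
  have hre : ∀ x : Euc n, ‖F x‖ ^ 2 = (F x * (starRingEnd ℂ) (F x)).re := by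
    intro x
    rw [Complex.mul_conj, Complex.ofReal_re, Complex.normSq_eq_norm_sq]
  calc ∫ x in cubeQ n, ‖F x‖ ^ 2
      = ∫ x in cubeQ n, (F x * (starRingEnd ℂ) (F x)).re :=
        integral_congr_ae (Filter.Eventually.of_forall hre)
    _ = (∫ x in cubeQ n, F x * (starRingEnd ℂ) (F x)).re := by
        have := integral_re (μ := volume.restrict (cubeQ n)) hInt
        simpa using this
    _ = ((((2 * Real.pi) ^ n : ℝ) : ℂ) * ∑ l ∈ S, (a l * (starRingEnd ℂ) (a l))).re := by
        rw [hIval]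
    _ = (2 * Real.pi) ^ n * ∑ l ∈ S, ‖a l‖ ^ 2 := by
        simp_rw [Complex.mul_conj]
        rw [← Complex.ofReal_sum, ← Complex.ofReal_mul, Complex.ofReal_re]
        congr 1
        exact Finset.sum_congr rfl fun l _ => by
          rw [Complex.normSq_eq_norm_sq]

end Stmt13Aux

lemma sum_zeta {n : ℕ} (hn : 2 ≤ n) (α : ℝ) (b : Fin n → ℝ) :
    (∑ j : Fin n, (if (j : ℕ) = 0 then (α : ℂ) else if (j : ℕ) = 1 then (α : ℂ) * Complex.I
        else 0) * (Complex.I * ((b j : ℝ) : ℂ)))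
      = (α : ℂ) * Complex.I * ((b ⟨0, by omega⟩ : ℝ) : ℂ)
        - (α : ℂ) * ((b ⟨1, by omega⟩ : ℝ) : ℂ) := by
  have h0 : (0 : ℕ) < n := by omega
  have h1 : (1 : ℕ) < n := by omega
  have key : ∀ j : Fin n,
      (if (j : ℕ) = 0 then (α : ℂ) else if (j : ℕ) = 1 then (α : ℂ) * Complex.I else 0)
          * (Complex.I * ((b j : ℝ) : ℂ))
        = (if j = ⟨0, h0⟩ then (α : ℂ) * Complex.I * ((b ⟨0, h0⟩ : ℝ) : ℂ) else 0)
          + (if j = ⟨1, h1⟩ then -((α : ℂ) * ((b ⟨1, h1⟩ : ℝ) : ℂ)) else 0) := by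
    intro j
    by_cases e0 : (j : ℕ) = 0
    · have hj : j = ⟨0, h0⟩ := Fin.ext e0
      subst hj
      simp [Fin.ext_iff]
      ring
    · by_cases e1 : (j : ℕ) = 1
      · have hj : j = ⟨1, h1⟩ := Fin.ext e1
        subst hj
        simp [Fin.ext_iff]
        ring_nf
        simp [Complex.I_sq]
      · have n0 : j ≠ ⟨0, h0⟩ := fun h => e0 (by rw [h])
        have n1 : j ≠ ⟨1, h1⟩ := fun h => e1 (by rw [h])
        rw [if_neg e0, if_neg e1, if_neg n0, if_neg n1]
        ring
  rw [Finset.sum_congr rfl fun j _ => key j, Finset.sum_add_distrib,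
    Finset.sum_ite_eq' Finset.univ, Finset.sum_ite_eq' Finset.univ]
  simp only [Finset.mem_univ, if_true]
  ring

open Stmt13Aux

/-- Solvability of (−Δ − 2λ ζ·∇) r = f for ζ = α e₁ + i α e₂ and trigonometric data
f(x) = Σ_{l∈S} c_l e^{i(l + ½e₁)·x}, with the L²(Q) estimate ‖r‖ ≤ (λα)⁻¹ ‖f‖. -/
theorem stmt13 {n : ℕ} (hn : 2 ≤ n)
    (α lam : ℝ) (hα : 0 < α) (hlam : 0 < lam)
    (S : Finset (Fin n → ℤ)) (c : (Fin n → ℤ) → ℂ)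
    (ζ : Fin n → ℂ)
    (hζ : ζ = fun j : Fin n => if (j : ℕ) = 0 then (α : ℂ)
      else if (j : ℕ) = 1 then (α : ℂ) * Complex.I else 0)
    (f : Euc n → ℂ)
    (hf : f = fun x => ∑ l ∈ S, c l *
      Complex.exp (Complex.I * ∑ j : Fin n,
        (((l j : ℝ) + if (j : ℕ) = 0 then (1 : ℝ) / 2 else 0 : ℝ) : ℂ) * (x j : ℂ))) :
    ∃ r : Euc n → ℂ, ContDiff ℝ (⊤ : ℕ∞) r ∧
      (∀ x : Euc n,
        (-(∑ j, pdC (fun y => pdC r j y) j x) - 2 * (lam : ℂ) * ∑ j, ζ j * pdC r j x) = f x) ∧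
      (∫ x in cubeQ n, ‖r x‖ ^ 2) ≤ ((lam * α)⁻¹) ^ 2 * ∫ x in cubeQ n, ‖f x‖ ^ 2 := by
  have h0 : (0 : ℕ) < n := by omega
  have h1 : (1 : ℕ) < n := by omega
  have hfw : f = fun x => ∑ l ∈ S, c l * w (bet l) x := by
    rw [hf]
    funext x
    exact Finset.sum_congr rfl fun l _ => by rw [w_eq]; rfl
  -- the symbol p
  set p : (Fin n → ℤ) → ℂ := fun l =>
    ((∑ j, (bet l j) ^ 2 : ℝ) : ℂ) + ((2 * lam * α * (bet l ⟨1, h1⟩) : ℝ) : ℂ)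
      - ((2 * lam * α * (bet l ⟨0, h0⟩) : ℝ) : ℂ) * Complex.I with hpdef
  have hpcoef : ∀ l : Fin n → ℤ,
      ((∑ j, (bet l j) ^ 2 : ℝ) : ℂ)
        - 2 * (lam : ℂ) * (∑ j, ζ j * (Complex.I * ((bet l j : ℝ) : ℂ))) = p l := by
    intro l
    rw [hζ, sum_zeta hn α (bet l), hpdef]
    push_cast
    ring
  have hpim : ∀ l, (p l).im = -(2 * lam * α * (bet l ⟨0, h0⟩)) := by
    intro l
    rw [hpdef]
    simp only [Complex.sub_im, Complex.add_im, Complex.ofReal_im, Complex.mul_im,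
      Complex.ofReal_re, Complex.I_im, Complex.I_re, mul_zero, mul_one, zero_add, add_zero]
    ring
  have hbet0 : ∀ l : Fin n → ℤ, (1 : ℝ) / 2 ≤ |bet l ⟨0, h0⟩| := by
    intro l
    have hb : bet l ⟨0, h0⟩ = (l ⟨0, h0⟩ : ℝ) + 1 / 2 := by simp [bet]
    rw [hb]
    rcases le_or_gt 0 (l ⟨0, h0⟩) with h | h
    · have : (0 : ℝ) ≤ (l ⟨0, h0⟩ : ℝ) := by exact_mod_cast h
      rw [_root_.abs_of_nonneg (by linarith)]
      linarith
    · have hk : l ⟨0, h0⟩ ≤ -1 := by omega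
      have : ((l ⟨0, h0⟩ : ℝ)) ≤ -1 := by exact_mod_cast hk
      rw [_root_.abs_of_nonpos (by linarith)]
      linarith
  have hla : 0 < lam * α := mul_pos hlam hα
  have hpnorm : ∀ l, lam * α ≤ ‖p l‖ := by
    intro l
    have him : |(p l).im| = 2 * lam * α * |bet l ⟨0, h0⟩| := by
      rw [hpim, abs_neg, abs_mul, _root_.abs_of_nonneg (by positivity : (0:ℝ) ≤ 2 * lam * α)]
    calc lam * α = 2 * lam * α * (1 / 2) := by ring
      _ ≤ 2 * lam * α * |bet l ⟨0, h0⟩| := by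
          exact mul_le_mul_of_nonneg_left (hbet0 l) (by positivity)
      _ = |(p l).im| := him.symm
      _ ≤ ‖p l‖ := Complex.abs_im_le_norm _
  have hpne : ∀ l, p l ≠ 0 := by
    intro l h
    have := hpnorm l
    rw [h] at this
    simp at this
    nlinarith
  refine ⟨fun x => ∑ l ∈ S, (c l / p l) * w (bet l) x, ?_, ?_, ?_⟩
  · exact ContDiff.sum fun l _ => contDiff_const.mul (contDiff_w (bet l))
  · intro x
    have hsecond : ∀ j : Fin n,
        pdC (fun y => pdC (fun z => ∑ l ∈ S, (c l / p l) * w (bet l) z) j y) j x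
          = ∑ l ∈ S, (c l / p l) * ((Complex.I * ((bet l j : ℝ) : ℂ)) ^ 2 * w (bet l) x) := by
      intro j
      have hfe : (fun y => pdC (fun z => ∑ l ∈ S, (c l / p l) * w (bet l) z) j y)
          = fun y => ∑ l ∈ S, ((c l / p l) * (Complex.I * ((bet l j : ℝ) : ℂ))) * w (bet l) y := by
        funext y
        rw [pdC_sum_mul S (fun l => c l / p l) (fun l => bet l) j y]
        exact Finset.sum_congr rfl fun l _ => (mul_assoc _ _ _).symm
      rw [hfe, pdC_sum_mul S (fun l => (c l / p l) * (Complex.I * ((bet l j : ℝ) : ℂ)))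
        (fun l => bet l) j x]
      exact Finset.sum_congr rfl fun l _ => by ring
    have h1j : ∀ j : Fin n, pdC (fun z => ∑ l ∈ S, (c l / p l) * w (bet l) z) j x
        = ∑ l ∈ S, (c l / p l) * ((Complex.I * ((bet l j : ℝ) : ℂ)) * w (bet l) x) :=
      fun j => pdC_sum_mul S (fun l => c l / p l) (fun l => bet l) j x
    have e1 : (∑ j, pdC (fun y =>
          pdC (fun z => ∑ l ∈ S, (c l / p l) * w (bet l) z) j y) j x)
        = ∑ l ∈ S, (c l / p l) *
            ((∑ j, (Complex.I * ((bet l j : ℝ) : ℂ)) ^ 2) * w (bet l) x) := by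
      rw [Finset.sum_congr rfl fun j _ => hsecond j, Finset.sum_comm]
      refine Finset.sum_congr rfl fun l _ => ?_
      rw [Finset.sum_mul, Finset.mul_sum]
    have e2 : (∑ j, ζ j * pdC (fun z => ∑ l ∈ S, (c l / p l) * w (bet l) z) j x)
        = ∑ l ∈ S, (c l / p l) *
            ((∑ j, ζ j * (Complex.I * ((bet l j : ℝ) : ℂ))) * w (bet l) x) := by
      rw [Finset.sum_congr rfl fun j _ => by rw [h1j j, Finset.mul_sum], Finset.sum_comm]
      refine Finset.sum_congr rfl fun l _ => ?_
      rw [Finset.sum_mul, Finset.mul_sum]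
      exact Finset.sum_congr rfl fun j _ => by ring
    have hsq : ∀ l : Fin n → ℤ, (∑ j, (Complex.I * ((bet l j : ℝ) : ℂ)) ^ 2)
        = -(((∑ j, (bet l j) ^ 2 : ℝ)) : ℂ) := by
      intro l
      push_cast
      rw [← Finset.sum_neg_distrib]
      exact Finset.sum_congr rfl fun j _ => by
        rw [mul_pow, Complex.I_sq]; ring
    rw [e1, e2, hfw]
    rw [Finset.mul_sum, ← Finset.sum_neg_distrib, ← Finset.sum_sub_distrib]
    refine Finset.sum_congr rfl fun l hl => ?_
    have step : -((c l / p l) * ((∑ j, (Complex.I * ((bet l j : ℝ) : ℂ)) ^ 2) * w (bet l) x))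
          - 2 * (lam : ℂ) * ((c l / p l) *
            ((∑ j, ζ j * (Complex.I * ((bet l j : ℝ) : ℂ))) * w (bet l) x))
        = (c l / p l) * ((-(∑ j, (Complex.I * ((bet l j : ℝ) : ℂ)) ^ 2)
            - 2 * (lam : ℂ) * (∑ j, ζ j * (Complex.I * ((bet l j : ℝ) : ℂ)))) * w (bet l) x) := by
      ring
    rw [step, hsq, neg_neg, hpcoef, ← mul_assoc, div_mul_cancel₀ _ (hpne l)]
  · have hr2 := l2norm S (fun l => c l / p l)
    have hf2 : (∫ x in cubeQ n, ‖f x‖ ^ 2) = (2 * Real.pi) ^ n * ∑ l ∈ S, ‖c l‖ ^ 2 := by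
      rw [hfw]
      exact l2norm S c
    rw [hr2, hf2]
    have hterm : ∀ l ∈ S, ‖c l / p l‖ ^ 2 ≤ ((lam * α)⁻¹) ^ 2 * ‖c l‖ ^ 2 := by
      intro l _
      rw [norm_div, div_pow]
      calc ‖c l‖ ^ 2 / ‖p l‖ ^ 2 ≤ ‖c l‖ ^ 2 / (lam * α) ^ 2 := by
            gcongr
            exact hpnorm l
        _ = ((lam * α)⁻¹) ^ 2 * ‖c l‖ ^ 2 := by
            rw [div_eq_mul_inv, ← inv_pow]
            ring
    calc (2 * Real.pi) ^ n * ∑ l ∈ S, ‖c l / p l‖ ^ 2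
        ≤ (2 * Real.pi) ^ n * ∑ l ∈ S, ((lam * α)⁻¹) ^ 2 * ‖c l‖ ^ 2 := by
          refine mul_le_mul_of_nonneg_left (Finset.sum_le_sum hterm) ?_
          positivity
      _ = ((lam * α)⁻¹) ^ 2 * ((2 * Real.pi) ^ n * ∑ l ∈ S, ‖c l‖ ^ 2) := by
          rw [← Finset.mul_sum]
          ring
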